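/- If a smooth curve t ↦ L(t) of n×n real matrices satisfies L'(t) = M(t)·L(t) − L(t)·M(t) for some matrix-valued function M, then for every natural number k the function t ↦ trace(L(t)^k) is constant. -/

import Mathlib

/-- If L'(t) = M(t)L(t) − L(t)M(t), then every trace(L(t)^k) is constant. -/
theorem stmt4 {n : ℕ} (L M : ℝ → Matrix (Fin n) (Fin n) ℝ)
    (hL : ∀ i j, Differentiable ℝ (fun t => L t i j))
    (hM : ∀ i j, Continuous (fun t => M t i j))
    (hLax : ∀ (t : ℝ) (i j : Fin n),
      deriv (fun s => L s i j) t = (M t * L t - L t * M t) i j) :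
    ∀ (k : ℕ) (t s : ℝ), (L t ^ k).trace = (L s ^ k).trace := by
  set C : ℝ → Matrix (Fin n) (Fin n) ℝ := fun t => M t * L t - L t * M t with hC
  have hLd : ∀ (t : ℝ) (i j : Fin n), HasDerivAt (fun s => L s i j) (C t i j) t := by
    intro t i j
    have h := ((hL i j) t).hasDerivAt
    rwa [hLax t i j] at h
  -- entrywise product rule
  have hmul : ∀ (A B : ℝ → Matrix (Fin n) (Fin n) ℝ) (A' B' : Matrix (Fin n) (Fin n) ℝ) (t : ℝ),
      (∀ i j, HasDerivAt (fun s => A s i j) (A' i j) t) →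
      (∀ i j, HasDerivAt (fun s => B s i j) (B' i j) t) →
      ∀ i j, HasDerivAt (fun s => (A s * B s) i j) ((A' * B t + A t * B') i j) t := by
    intro A B A' B' t hA hB i j
    have h : HasDerivAt (fun s => ∑ k, A s i k * B s k j)
        (∑ k, (A' i k * B t k j + A t i k * B' k j)) t :=
      HasDerivAt.fun_sum (fun k _ => (hA i k).mul (hB k j))
    simpa [Matrix.mul_apply, Matrix.add_apply, Finset.sum_add_distrib] using h
  -- derivative of L^k entrywise
  have hpow : ∀ (k : ℕ) (t : ℝ) (i j : Fin n),
      HasDerivAt (fun s => (L s ^ k) i j)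
        ((∑ m ∈ Finset.range k, L t ^ m * C t * L t ^ (k - 1 - m)) i j) t := by
    intro k
    induction k with
    | zero =>
      intro t i j
      simpa using hasDerivAt_const t ((1 : Matrix (Fin n) (Fin n) ℝ) i j)
    | succ k ih =>
      intro t i j
      have h := hmul L (fun s => L s ^ k) (C t)
        (∑ m ∈ Finset.range k, L t ^ m * C t * L t ^ (k - 1 - m)) t (hLd t) (ih t) i j
      have heq : (fun s => (L s * L s ^ k) i j) = fun s => (L s ^ (k + 1)) i j := by
        funext s; rw [pow_succ']
      rw [heq] at h
      have hmat : (∑ m ∈ Finset.range (k + 1), L t ^ m * C t * L t ^ (k + 1 - 1 - m))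
          = C t * L t ^ k + L t * ∑ m ∈ Finset.range k, L t ^ m * C t * L t ^ (k - 1 - m) := by
        rw [Finset.sum_range_succ', Finset.mul_sum]
        simp only [Nat.succ_sub_one, pow_zero, one_mul, Nat.sub_zero]
        rw [add_comm]
        congr 1
        apply Finset.sum_congr rfl
        intro m hm
        simp only [show k - (m + 1) = k - 1 - m from by omega, pow_succ', mul_assoc]
      rw [hmat]
      exact h
  -- trace of the derivative vanishes
  have htr : ∀ (k : ℕ) (t : ℝ),
      (∑ m ∈ Finset.range k, L t ^ m * C t * L t ^ (k - 1 - m)).trace = 0 := by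
    intro k t
    rw [Matrix.trace_sum]
    apply Finset.sum_eq_zero
    intro m hm
    have hmk : k - 1 - m + m = k - 1 := by
      have := Finset.mem_range.mp hm; omega
    rw [mul_assoc, Matrix.trace_mul_comm, mul_assoc, ← pow_add, hmk]
    rw [hC]
    simp only [sub_mul, Matrix.trace_sub, mul_assoc]
    rw [Matrix.trace_mul_comm (L t) (M t * L t ^ (k - 1)), mul_assoc,
      show L t ^ (k - 1) * L t = L t * L t ^ (k - 1) from by rw [← pow_succ, pow_succ'],
      sub_self]
  have hd : ∀ (k : ℕ) (t : ℝ), HasDerivAt (fun s => (L s ^ k).trace) 0 t := by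
    intro k t
    have h : HasDerivAt (fun s => ∑ i, (L s ^ k) i i)
        (∑ i, (∑ m ∈ Finset.range k, L t ^ m * C t * L t ^ (k - 1 - m)) i i) t :=
      HasDerivAt.fun_sum (fun i _ => hpow k t i i)
    have hz : (∑ i, (∑ m ∈ Finset.range k, L t ^ m * C t * L t ^ (k - 1 - m)) i i) = 0 := htr k t
    rw [hz] at h
    simpa [Matrix.trace, Matrix.diag] using h
  intro k t s
  exact is_const_of_deriv_eq_zero (fun x => (hd k x).differentiableAt)
    (fun x => (hd k x).deriv) t s
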